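/- Let k be a field, 0 ≤ a < b ≤ N and c < d two further indices with b < c < d ≤ M. Suppose square-free quadrics F_{abc}, F_{abd}, F_{acd}, F_{bcd} ∈ k[x_0,...,x_M] satisfy the Koszul relation (-1)^a x_a F_{bcd} + (-1)^{b-1} x_b F_{acd} + (-1)^{c-2} x_c F_{abd} + (-1)^{d-3} x_d F_{abc} = 0, and suppose F_{abc} = x_c L^c_{ab} and F_{abd} = x_d L^d_{ab}, where L^c_{ab}, L^d_{ab} are linear forms in x_a, x_b, and F_{acd} = λ_a x_a x_c + μ_a x_a x_d + ν_a x_c x_d, F_{bcd} = λ_b x_b x_c + μ_b x_b x_d + ν_b x_c x_d. Then (-1)^a x_a ν_b + (-1)^{b-1} x_b ν_a + (-1)^{c-2} L^d_{ab} + (-1)^{d-3} L^c_{ab} = 0 as linear forms. -/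
import Mathlib


open MvPolynomial

/-- Lemma 4.2(3): comparing the coefficient of `x_c x_d` in the Koszul relation among the
four quadrics, after the splittings `F_{abc} = x_c L^c_{ab}` and `F_{abd} = x_d L^d_{ab}`,
yields `(-1)^a x_a ν_b + (-1)^{b-1} x_b ν_a + (-1)^{c-2} L^d_{ab} + (-1)^{d-3} L^c_{ab} = 0`. -/
theorem stmt_8 {k : Type*} [Field k] (M : ℕ) (a b c d : Fin (M + 1))
    (hab : a < b) (hbc : b < c) (hcd : c < d)
    (α₁ β₁ α₂ β₂ lama mua nua lamb mub nub : k)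
    (Lc Ld : MvPolynomial (Fin (M + 1)) k)
    (hLc : Lc = C α₁ * X a + C β₁ * X b) (hLd : Ld = C α₂ * X a + C β₂ * X b)
    (Fabc Fabd Facd Fbcd : MvPolynomial (Fin (M + 1)) k)
    (hFabc : Fabc = X c * Lc) (hFabd : Fabd = X d * Ld)
    (hFacd : Facd = C lama * X a * X c + C mua * X a * X d + C nua * X c * X d)
    (hFbcd : Fbcd = C lamb * X b * X c + C mub * X b * X d + C nub * X c * X d)
    (hK : C ((-1 : k) ^ (a : ℕ)) * X a * Fbcd - C ((-1 : k) ^ (b : ℕ)) * X b * Facd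
      + C ((-1 : k) ^ (c : ℕ)) * X c * Fabd - C ((-1 : k) ^ (d : ℕ)) * X d * Fabc = 0) :
    C ((-1 : k) ^ (a : ℕ) * nub) * X a - C ((-1 : k) ^ (b : ℕ) * nua) * X b
      + C ((-1 : k) ^ (c : ℕ)) * Ld - C ((-1 : k) ^ (d : ℕ)) * Lc = 0 := by
  subst hLc hLd hFabc hFabd hFacd hFbcd
  have hac : a ≠ c := (hab.trans hbc).ne
  have had : a ≠ d := ((hab.trans hbc).trans hcd).ne
  have hbc' : b ≠ c := hbc.ne
  have hbd : b ≠ d := (hbc.trans hcd).ne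
  have hcd' : c ≠ d := hcd.ne
  -- three evaluation maps
  set f1 : Fin (M + 1) → MvPolynomial (Fin (M + 1)) k :=
    fun i => if i = c then 1 else if i = d then 1 else X i with hf1
  set f2 : Fin (M + 1) → MvPolynomial (Fin (M + 1)) k :=
    fun i => if i = c then 1 else if i = d then 0 else X i with hf2
  set f3 : Fin (M + 1) → MvPolynomial (Fin (M + 1)) k :=
    fun i => if i = c then 0 else if i = d then 1 else X i with hf3
  have h1 := congrArg (aeval f1) hK
  have h2 := congrArg (aeval f2) hK
  have h3 := congrArg (aeval f3) hK
  simp only [map_add, map_sub, map_mul, aeval_X, aeval_C, algebraMap_eq, map_zero, hf1, hf2, hf3,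
    if_neg hac, if_neg had, if_neg hbc', if_neg hbd, if_neg hcd', if_true, ite_true, if_neg hcd'.symm, if_pos rfl, mul_one, mul_zero, zero_mul, one_mul] at h1 h2 h3
  rw [show ((-1 : k) ^ (a : ℕ) * nub) = ((-1 : k) ^ (a : ℕ)) * nub from rfl, C_mul,
    show ((-1 : k) ^ (b : ℕ) * nua) = ((-1 : k) ^ (b : ℕ)) * nua from rfl, C_mul]
  linear_combination h1 - h2 - h3
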